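/- The function q_L(t) = ln( λ/ρ + (1 − λ/ρ)·e^{−ρ(T−t)} ) is well defined on [0, T] (the argument of the logarithm is strictly positive there) and satisfies the integral equation q_L(t) = ∫_t^T ( λ·e^{−q_L(s)} − ρ ) ds for all t ∈ [0, T]. -/

import Mathlib

/-- `q_L(t) = ln(λ/ρ + (1 - λ/ρ)·e^{-ρ(T-t)})` is well defined on `[0, T]` and
satisfies `q_L(t) = ∫_t^T (λ e^{-q_L(s)} - ρ) ds`. -/
theorem qL_solves_integral_equation
    (T ρ lam : ℝ) (hT : 0 < T) (hρ : 0 < ρ) (hlam : 0 ≤ lam)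
    (qL : ℝ → ℝ)
    (hqL : ∀ t : ℝ,
      qL t = Real.log (lam / ρ + (1 - lam / ρ) * Real.exp (-ρ * (T - t)))) :
    (∀ t ∈ Set.Icc (0 : ℝ) T,
      0 < lam / ρ + (1 - lam / ρ) * Real.exp (-ρ * (T - t))) ∧
    (∀ t ∈ Set.Icc (0 : ℝ) T,
      qL t = ∫ s in t..T, (lam * Real.exp (-qL s) - ρ)) := by
  have hg : ∀ s : ℝ, s ≤ T → 0 < lam / ρ + (1 - lam / ρ) * Real.exp (-ρ * (T - s)) := by
    intro s hs
    have hE1 : Real.exp (-ρ * (T - s)) ≤ 1 := by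
      apply Real.exp_le_one_iff.mpr
      nlinarith [hρ.le]
    have hE0 : 0 < Real.exp (-ρ * (T - s)) := Real.exp_pos _
    have ha : 0 ≤ lam / ρ := div_nonneg hlam hρ.le
    nlinarith
  refine ⟨fun t ht => hg t ht.2, ?_⟩
  have hqT : qL T = 0 := by
    rw [hqL]
    have : -ρ * (T - T) = 0 := by ring
    rw [this, Real.exp_zero]
    norm_num
  have hderiv : ∀ s : ℝ, s ≤ T →
      HasDerivAt (fun u => -qL u) (lam * Real.exp (-qL s) - ρ) s := by
    intro s hs
    have hgs := hg s hs
    have hinner : HasDerivAt (fun u : ℝ => lam / ρ + (1 - lam / ρ) * Real.exp (-ρ * (T - u)))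
        ((1 - lam / ρ) * (Real.exp (-ρ * (T - s)) * ρ)) s := by
      have h0 : HasDerivAt (fun u : ℝ => -ρ * (T - u)) ρ s := by
        have := ((hasDerivAt_id s).const_sub T).const_mul (-ρ)
        simpa using this
      exact ((h0.exp.const_mul ((1 : ℝ) - lam / ρ)).const_add (lam / ρ))
    have hlog : HasDerivAt (fun u => qL u)
        (((1 - lam / ρ) * (Real.exp (-ρ * (T - s)) * ρ)) /
          (lam / ρ + (1 - lam / ρ) * Real.exp (-ρ * (T - s)))) s := by
      have h := (Real.hasDerivAt_log hgs.ne').comp s hinner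
      have hfun : qL = fun u => Real.log (lam / ρ + (1 - lam / ρ) * Real.exp (-ρ * (T - u))) :=
        funext hqL
      rw [hfun]
      simpa [Function.comp_def, div_eq_mul_inv, mul_comm] using h
    have hval : -(((1 - lam / ρ) * (Real.exp (-ρ * (T - s)) * ρ)) /
          (lam / ρ + (1 - lam / ρ) * Real.exp (-ρ * (T - s))))
        = lam * Real.exp (-qL s) - ρ := by
      have hexp : Real.exp (-qL s)
          = (lam / ρ + (1 - lam / ρ) * Real.exp (-ρ * (T - s)))⁻¹ := by
        rw [hqL, Real.exp_neg, Real.exp_log hgs]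
      set g := lam / ρ + (1 - lam / ρ) * Real.exp (-ρ * (T - s)) with hG
      have h1 : lam - ρ * g = -((1 - lam / ρ) * (Real.exp (-ρ * (T - s)) * ρ)) := by
        rw [hG]; field_simp; ring
      have h2 : lam * g⁻¹ - ρ = (lam - ρ * g) / g := by
        field_simp
      rw [hexp, h2, h1, neg_div]
    have := hlog.neg
    rw [hval] at this
    exact this
  intro t ht
  have htT : t ≤ T := ht.2
  have huIcc : Set.uIcc t T = Set.Icc t T := Set.uIcc_of_le htT
  have hcont : ContinuousOn (fun s => lam * Real.exp (-qL s) - ρ) (Set.uIcc t T) := by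
    have hfun : qL = fun u => Real.log (lam / ρ + (1 - lam / ρ) * Real.exp (-ρ * (T - u))) :=
      funext hqL
    rw [hfun, huIcc]
    have hgc : ContinuousOn (fun u : ℝ => lam / ρ + (1 - lam / ρ) * Real.exp (-ρ * (T - u)))
        (Set.Icc t T) := (by fun_prop : Continuous (fun u : ℝ => lam / ρ + (1 - lam / ρ) * Real.exp (-ρ * (T - u)))).continuousOn
    have hlogc : ContinuousOn (fun u : ℝ =>
        Real.log (lam / ρ + (1 - lam / ρ) * Real.exp (-ρ * (T - u)))) (Set.Icc t T) :=
      hgc.log (fun x hx => (hg x hx.2).ne')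
    exact ((continuousOn_const.mul (hlogc.neg.rexp)).sub continuousOn_const)
  have hint : IntervalIntegrable (fun s => lam * Real.exp (-qL s) - ρ)
      MeasureTheory.volume t T := hcont.intervalIntegrable
  have := intervalIntegral.integral_eq_sub_of_hasDerivAt
    (f := fun u => -qL u) (f' := fun s => lam * Real.exp (-qL s) - ρ)
    (fun x hx => hderiv x (by rw [huIcc] at hx; exact hx.2)) hint
  rw [this]
  simp [hqT]
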